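/- Let G = (V, E) be a directed graph with all self-loops, with edge probabilities p(i,j) ∈ [0,1], and let G' be its undirected version with symmetrized probabilities p'(i,j) = (p(i,j) + p(j,i))/2. Define w'_i = (|C(i)|⁻¹·∑_{j∈C(i)} p'(j,i))⁻¹ where C(i) = C^in(i) ∪ C^out(i), and w^in_i, w^out_i as the reciprocals of the average incoming and outgoing probabilities over C^in(i) and C^out(i), respectively. Then for every vertex i, w'_i ≤ 2·(w^in_i + w^out_i). -/

import Mathlib

open Finset

/-- closed in-neighborhood. -/
def Cin {V : Type*} [Fintype V] [DecidableEq V]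
    (E : V → V → Prop) [DecidableRel E] (i : V) : Finset V :=
  insert i (Finset.univ.filter (fun j => E j i))

/-- closed out-neighborhood. -/
def Cout {V : Type*} [Fintype V] [DecidableEq V]
    (E : V → V → Prop) [DecidableRel E] (i : V) : Finset V :=
  insert i (Finset.univ.filter (fun j => E i j))

theorem stmt_16 {V : Type*} [Fintype V] [DecidableEq V]
    (E : V → V → Prop) [DecidableRel E] (hloop : ∀ i, E i i)
    (p : V → V → ℝ) (hp : ∀ i j, 0 ≤ p i j ∧ p i j ≤ 1)
    (hposIn : ∀ i, 0 < ∑ j ∈ Cin E i, p j i)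
    (hposOut : ∀ i, 0 < ∑ j ∈ Cout E i, p i j)
    (hpos : ∀ i, 0 < ∑ j ∈ Cin E i ∪ Cout E i, (p j i + p i j) / 2) :
    ∀ i : V,
      ((Cin E i ∪ Cout E i).card : ℝ) / (∑ j ∈ Cin E i ∪ Cout E i, (p j i + p i j) / 2) ≤
        2 * (((Cin E i).card : ℝ) / (∑ j ∈ Cin E i, p j i) +
              ((Cout E i).card : ℝ) / (∑ j ∈ Cout E i, p i j)) := by
  intro i
  have hSin := hposIn i
  have hSout := hposOut i
  have hS := hpos i
  have hnn : ∀ j ∈ Cin E i ∪ Cout E i, 0 ≤ (p j i + p i j) / 2 := by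
    intro j _
    have := (hp j i).1; have := (hp i j).1; positivity
  have h1 : (∑ j ∈ Cin E i, p j i) / 2 ≤ ∑ j ∈ Cin E i ∪ Cout E i, (p j i + p i j) / 2 := by
    rw [Finset.sum_div]
    calc ∑ j ∈ Cin E i, p j i / 2
        ≤ ∑ j ∈ Cin E i, (p j i + p i j) / 2 := by
          apply Finset.sum_le_sum
          intro j _
          have := (hp i j).1
          linarith
      _ ≤ _ := Finset.sum_le_sum_of_subset_of_nonneg Finset.subset_union_left
          (fun j hj _ => hnn j hj)
  have h2 : (∑ j ∈ Cout E i, p i j) / 2 ≤ ∑ j ∈ Cin E i ∪ Cout E i, (p j i + p i j) / 2 := by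
    rw [Finset.sum_div]
    calc ∑ j ∈ Cout E i, p i j / 2
        ≤ ∑ j ∈ Cout E i, (p j i + p i j) / 2 := by
          apply Finset.sum_le_sum
          intro j _
          have := (hp j i).1
          linarith
      _ ≤ _ := Finset.sum_le_sum_of_subset_of_nonneg Finset.subset_union_right
          (fun j hj _ => hnn j hj)
  have hcard : ((Cin E i ∪ Cout E i).card : ℝ) ≤ (Cin E i).card + (Cout E i).card := by
    exact_mod_cast Finset.card_union_le _ _
  calc ((Cin E i ∪ Cout E i).card : ℝ) / (∑ j ∈ Cin E i ∪ Cout E i, (p j i + p i j) / 2)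
      ≤ (((Cin E i).card : ℝ) + (Cout E i).card) /
          (∑ j ∈ Cin E i ∪ Cout E i, (p j i + p i j) / 2) := by gcongr
    _ = ((Cin E i).card : ℝ) / (∑ j ∈ Cin E i ∪ Cout E i, (p j i + p i j) / 2)
        + ((Cout E i).card : ℝ) / (∑ j ∈ Cin E i ∪ Cout E i, (p j i + p i j) / 2) :=
        add_div _ _ _
    _ ≤ ((Cin E i).card : ℝ) / ((∑ j ∈ Cin E i, p j i) / 2)
        + ((Cout E i).card : ℝ) / ((∑ j ∈ Cout E i, p i j) / 2) := by
        gcongr <;> positivity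
    _ = 2 * (((Cin E i).card : ℝ) / (∑ j ∈ Cin E i, p j i) +
              ((Cout E i).card : ℝ) / (∑ j ∈ Cout E i, p i j)) := by
        field_simp
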